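/- Fix β ∈ ℤ. Suppose (P_F)_{F ∈ For} and (Q_F)_{F ∈ For} are families of polynomials in R such that P_∅ = Q_∅ = 1, ct P_F = ct Q_F = 0 for all F ≠ ∅, and for every indexed forest F and every i ≥ 1: π̃_i P_F = P_{F/i} and π̃_i Q_F = Q_{F/i} if i ∈ QDes(F), while π̃_i P_F = −β · R_i P_F and π̃_i Q_F = −β · R_i Q_F if i ∉ QDes(F). Then P_F = Q_F for all F ∈ For. -/

import Mathlib

open MvPolynomial

/-- The ambient ring `R = ℤ[x₁, x₂, …]`, with variables indexed by positive integers. -/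
abbrev MyR : Type := MvPolynomial ℕ+ ℤ

/-- The Bergeron–Sottile operator `R_i`: the `ℤ`-algebra map with
`x_j ↦ x_j` for `j < i`, `x_i ↦ 0`, and `x_j ↦ x_{j-1}` for `j > i`. -/
noncomputable def BS (i : ℕ+) : MyR →ₐ[ℤ] MyR :=
  aeval fun j : ℕ+ =>
    if j < i then (X j : MyR) else if j = i then 0 else X (j - 1)

/-- Plane binary trees. -/
inductive BTree : Type
  | leaf : BTree
  | node : BTree → BTree → BTree
  deriving DecidableEq

namespace BTree

def numLeaves : BTree → ℕ+
  | leaf => 1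
  | node l r => l.numLeaves + r.numLeaves

/-- Number of internal nodes. -/
def size : BTree → ℕ
  | leaf => 0
  | node l r => l.size + r.size + 1

/-- `qdesSet T a` : the QDes positions contributed by a tree `T` whose leftmost
leaf carries the label `a` (leaves are labeled consecutively left-to-right). -/
def qdesSet : BTree → ℕ+ → Set ℕ+
  | leaf, _ => ∅
  | node leaf leaf, a => {a}
  | node l r, a => l.qdesSet a ∪ r.qdesSet (a + l.numLeaves)

/-- `trim T a i` : replace the terminal node whose leaf-children are labeled
`i`, `i+1` by a single leaf (`a` = label of the leftmost leaf of `T`). -/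
def trim : BTree → ℕ+ → ℕ+ → BTree
  | leaf, _, _ => leaf
  | node l r, a, i =>
    if l = leaf ∧ r = leaf ∧ a = i then leaf
    else node (l.trim a i) (r.trim (a + l.numLeaves) i)

/-- `rightAt T a i = true` iff the terminal node of `T` whose leaf-children are
labeled `i`, `i+1` is the right child of its parent. -/
def rightAt : BTree → ℕ+ → ℕ+ → Bool
  | leaf, _, _ => false
  | node l r, a, i =>
    l.rightAt a i || r.rightAt (a + l.numLeaves) i ||
      (decide (r = node leaf leaf) && decide (a + l.numLeaves = i))

end BTree

/-- An indexed forest: a sequence of plane binary trees, all but finitely many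
of which are the single leaf. -/
structure IndexedForest : Type where
  trees : ℕ → BTree
  finite : {n : ℕ | trees n ≠ BTree.leaf}.Finite

namespace IndexedForest

noncomputable def supp (F : IndexedForest) : Finset ℕ := F.finite.toFinset

/-- `|F|`, the number of internal nodes of `F`. -/
noncomputable def size (F : IndexedForest) : ℕ := ∑ n ∈ F.supp, (F.trees n).size

/-- The label of the leftmost leaf of the `n`-th tree (trees indexed from `0`;
leaves are labeled `1, 2, 3, …` from left to right across the trees). -/
def firstLeaf (F : IndexedForest) (n : ℕ) : ℕ+ :=
  ⟨1 + ∑ m ∈ Finset.range n, ((F.trees m).numLeaves : ℕ), by omega⟩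

/-- `QDes(F)`. -/
def qdes (F : IndexedForest) : Set ℕ+ :=
  ⋃ n : ℕ, (F.trees n).qdesSet (F.firstLeaf n)

/-- `F/i`, the forest obtained by replacing the terminal node with leaf-children
`i`, `i+1` by a single leaf. -/
def trim (F : IndexedForest) (i : ℕ+) : IndexedForest where
  trees := fun n => (F.trees n).trim (F.firstLeaf n) i
  finite := F.finite.subset (fun n hn => by
    simp only [Set.mem_setOf_eq] at hn ⊢
    intro h
    apply hn
    rw [h]
    rfl)

/-- The empty forest `∅`. -/
protected def empty : IndexedForest :=
  ⟨fun _ => BTree.leaf, Set.finite_empty.subset (fun _ hn => (hn rfl).elim)⟩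

/-- The terminal node of `F` at `i ∈ QDes F` is a right child. -/
def rightAt (F : IndexedForest) (i : ℕ+) : Prop :=
  ∃ n : ℕ, (F.trees n).rightAt (F.firstLeaf n) i = true

open Classical in
/-- `min QDes(F)` (defaulting to `1` if `QDes(F)` is empty, i.e. `F = ∅`). -/
noncomputable def minQDes (F : IndexedForest) : ℕ+ :=
  if h : ((fun i : ℕ+ => (i : ℕ)) '' F.qdes).Nonempty then
    ⟨sInf ((fun i : ℕ+ => (i : ℕ)) '' F.qdes), by
      obtain ⟨i, _, hieq⟩ := Nat.sInf_mem h
      exact hieq ▸ i.2⟩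
  else 1

end IndexedForest

/-- Set-valued labeled plane binary trees: each internal node carries a finite
set of positive integers. -/
inductive LTree : Type
  | leaf : LTree
  | node : Finset ℕ+ → LTree → LTree → LTree

namespace LTree

/-- Underlying unlabeled tree. -/
def shape : LTree → BTree
  | leaf => BTree.leaf
  | node _ l r => BTree.node l.shape r.shape

/-- The label set of the top of a subtree; a leaf with label `a` counts as the
singleton `{a}`. -/
def headSet : LTree → ℕ+ → Finset ℕ+
  | leaf, a => {a}
  | node S _ _, _ => S

/-- Compatibility of a set-valued labeling: every label set is nonempty,
`max κ(v) ≤ min κ(v_L)` and `max κ(v) < min κ(v_R)`.  The parameter `a` is the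
label of the leftmost leaf of the subtree. -/
def Compatible : LTree → ℕ+ → Prop
  | leaf, _ => True
  | node S l r, a =>
    S.Nonempty ∧ l.Compatible a ∧ r.Compatible (a + l.shape.numLeaves) ∧
    (∀ s ∈ S, ∀ t ∈ l.headSet a, s ≤ t) ∧
    (∀ s ∈ S, ∀ t ∈ r.headSet (a + l.shape.numLeaves), s < t)

/-- The monomial `x_κ` contributed by a labeled tree. -/
noncomputable def weight : LTree → MyR
  | leaf => 1
  | node S l r => (∏ j ∈ S, (X j : MyR)) * l.weight * r.weight

/-- `|κ|`, the total cardinality of the label sets. -/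
def lsize : LTree → ℕ
  | leaf => 0
  | node S l r => S.card + l.lsize + r.lsize

/-- All label sets are singletons. -/
def allSingle : LTree → Prop
  | leaf => True
  | node S l r => S.card = 1 ∧ l.allSingle ∧ r.allSingle

end LTree

/-- The type of compatible set-valued labelings of the indexed forest `F`. -/
def IndexedForest.Labelings (F : IndexedForest) : Type :=
  {κ : ℕ → LTree //
    (∀ n, (κ n).shape = F.trees n) ∧ ∀ n, (κ n).Compatible (F.firstLeaf n)}

/-- The grove polynomial `G_F^{(β)} = Σ_κ β^{|κ|-|F|} x_κ`. -/
noncomputable def groveP (β : ℤ) (F : IndexedForest) : MyR :=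
  ∑ᶠ κ : F.Labelings,
    C (β ^ ((∑ n ∈ F.supp, (κ.1 n).lsize) - F.size)) * ∏ n ∈ F.supp, (κ.1 n).weight

/-- The forest polynomial `𝔓_F`: the sum of `x_κ` over compatible set-valued
labelings all of whose label sets are singletons. -/
noncomputable def forestPoly (F : IndexedForest) : MyR :=
  ∑ᶠ κ : {κ : F.Labelings // ∀ n, (κ.1 n).allSingle},
    ∏ n ∈ F.supp, (κ.1.1 n).weight

open Classical in
/-- Fuel-indexed recursion implementing the grove extractor. -/
noncomputable def extractAux (T : ℕ+ → MyR → MyR) (β : ℤ) :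
    ℕ → IndexedForest → MyR → MyR
  | 0, _, f => f
  | k + 1, F, f =>
    if F = IndexedForest.empty then f
    else
      extractAux T β k (F.trim F.minQDes)
        (if F.rightAt F.minQDes then (1 + C β * X F.minQDes) * T F.minQDes f
         else T F.minQDes f)

/-- The grove extractor `Ĥ_F`: `Ĥ_∅ = id`, and for `F ≠ ∅` and `i = min QDes F`,
`Ĥ_F = Ĥ_{F/i} ∘ Ĥ^R_i` if the terminal node at `i` is a right child and
`Ĥ_F = Ĥ_{F/i} ∘ Ĥ^L_i` otherwise, where `Ĥ^L_i = T_i` and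
`Ĥ^R_i = (1 + βx_i)·T_i`.  (The recursion is implemented with fuel `|F|`, using
that `|F/i| = |F| - 1`.) -/
noncomputable def extract (T : ℕ+ → MyR → MyR) (β : ℤ) (F : IndexedForest) :
    MyR → MyR :=
  extractAux T β F.size F

/-- `S_∞`: permutations of `{1, 2, …}` fixing all but finitely many points. -/
def SPerm : Type := {w : Equiv.Perm ℕ+ // {x : ℕ+ | w x ≠ x}.Finite}

namespace SPerm

/-- The identity permutation. -/
protected def one : SPerm :=
  ⟨1, Set.finite_empty.subset (fun _ hx => (hx rfl).elim)⟩

/-- `w * s_i` where `s_i` is the transposition of `i` and `i+1`. -/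
noncomputable def mulSwap (w : SPerm) (i : ℕ+) : SPerm :=
  ⟨w.1 * Equiv.swap i (i + 1), by
    apply ((w.2.union (Set.finite_singleton i)).union
      (Set.finite_singleton (i + 1))).subset
    intro x hx
    simp only [Set.mem_setOf_eq, Equiv.Perm.mul_apply] at hx
    simp only [Set.mem_union, Set.mem_setOf_eq, Set.mem_singleton_iff]
    by_cases h1 : x = i
    · exact Or.inl (Or.inr h1)
    by_cases h2 : x = i + 1
    · exact Or.inr h2
    · exact Or.inl (Or.inl (by rwa [Equiv.swap_apply_of_ne_of_ne h1 h2] at hx))⟩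

/-- `ℓ(w)`, the number of inversions. -/
noncomputable def len (w : SPerm) : ℕ :=
  Set.ncard {p : ℕ+ × ℕ+ | p.1 < p.2 ∧ w.1 p.2 < w.1 p.1}

/-- `Des(w) = {i ≥ 1 : w(i) > w(i+1)}`. -/
def des (w : SPerm) : Set ℕ+ := {i : ℕ+ | w.1 (i + 1) < w.1 i}

end SPerm

/-- `f` is quasisymmetric in `x₁, …, xₙ`: no variable `x_j` with `j > n`
occurs, and coefficients of monomials with the same exponent word on strictly
increasing variable sequences in `{1, …, n}` agree. -/
def IsQuasisym (n : ℕ+) (f : MyR) : Prop :=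
  (∀ j : ℕ+, n < j → ∀ m ∈ f.support, m j = 0) ∧
  ∀ k : ℕ, 0 < k → ∀ a : Fin k → ℕ+, ∀ u v : Fin k → ℕ+,
    StrictMono u → StrictMono v → (∀ m, u m ≤ n) → (∀ m, v m ≤ n) →
    coeff (∑ m, Finsupp.single (u m) ((a m : ℕ))) f =
      coeff (∑ m, Finsupp.single (v m) ((a m : ℕ))) f

/-- The zigzag (chain) tree encoded by a list of booleans: the internal nodes
form a chain `v₁, …, v_k` (`k` = length + 1) and the `m`-th entry records
whether `v_{m+1}` is the right child of `v_m`. -/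
def chainTree : List Bool → BTree
  | [] => BTree.node BTree.leaf BTree.leaf
  | b :: rest =>
    if b then BTree.node BTree.leaf (chainTree rest)
    else BTree.node (chainTree rest) BTree.leaf

section Aux
open MvPolynomial

lemma BS_X (i j : ℕ+) : BS i (X j) =
    (if j < i then (X j : MyR) else if j = i then 0 else X (j - 1)) := by
  simp [BS]

lemma BS_C (i : ℕ+) (a : ℤ) : BS i (C a) = C a := by
  simp [BS, algHom_C]

lemma BS_X_self_succ (i : ℕ+) : BS (i + 1) (X (i + 1)) = 0 := by
  rw [BS_X]; simp

lemma pnat_succ_sub_one (i : ℕ+) : (i + 1 : ℕ+) - 1 = i := by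
  apply PNat.coe_injective
  rw [PNat.sub_coe, if_pos]
  · simp
  · exact PNat.lt_add_left 1 i

lemma BS_X_succ (i : ℕ+) : BS i (X (i + 1)) = X i := by
  rw [BS_X]
  rw [if_neg (by simp [← PNat.coe_lt_coe]), if_neg (by simp [← PNat.coe_inj])]
  rw [pnat_succ_sub_one]

end Aux
section Aux2
open MvPolynomial

lemma iter_zero (k : ℕ) : (BS 1)^[k] (0 : MyR) = 0 := by
  induction k with
  | zero => rfl
  | succ k ih => rw [Function.iterate_succ_apply, map_zero, ih]

lemma iter_C (k : ℕ) (a : ℤ) : (BS 1)^[k] (C a : MyR) = C a := by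
  induction k with
  | zero => rfl
  | succ k ih => rw [Function.iterate_succ_apply, BS_C, ih]

lemma iter_add (k : ℕ) (p q : MyR) :
    (BS 1)^[k] (p + q) = (BS 1)^[k] p + (BS 1)^[k] q := by
  induction k generalizing p q with
  | zero => rfl
  | succ k ih => rw [Function.iterate_succ_apply, map_add, ih]; rfl

lemma iter_mul (k : ℕ) (p q : MyR) :
    (BS 1)^[k] (p * q) = (BS 1)^[k] p * (BS 1)^[k] q := by
  induction k generalizing p q with
  | zero => rfl
  | succ k ih => rw [Function.iterate_succ_apply, map_mul, ih]; rfl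

lemma iter_X (k : ℕ) (j : ℕ+) (h : (j : ℕ) ≤ k) : (BS 1)^[k] (X j : MyR) = 0 := by
  induction k generalizing j with
  | zero => exact absurd h (by have := j.pos; omega)
  | succ k ih =>
    rw [Function.iterate_succ_apply, BS_X]
    rw [if_neg (show ¬ (j < 1) from not_lt.mpr (PNat.one_le j))]
    by_cases hj : j = 1
    · rw [if_pos hj, iter_zero]
    · rw [if_neg hj]
      apply ih
      have h2 : 1 < j := lt_of_le_of_ne (PNat.one_le j) (Ne.symm hj)
      have h3 : (1:ℕ) < (j:ℕ) := (PNat.coe_lt_coe 1 j).mpr h2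
      rw [PNat.sub_coe, if_pos h2, PNat.one_coe]
      omega

lemma iter_eventually_C (f : MyR) :
    ∃ k : ℕ, (BS 1)^[k] f = C (constantCoeff f) := by
  induction f using MvPolynomial.induction_on with
  | C a => exact ⟨0, by simp⟩
  | add p q hp hq =>
    obtain ⟨kp, hkp⟩ := hp
    obtain ⟨kq, hkq⟩ := hq
    refine ⟨max kp kq, ?_⟩
    have stab : ∀ (g : MyR) (k m : ℕ), (BS 1)^[k] g = C (constantCoeff g) →
        (BS 1)^[k + m] g = C (constantCoeff g) := by
      intro g k m h
      rw [add_comm, Function.iterate_add_apply, h, iter_C]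
    have h1 : (BS 1)^[max kp kq] p = C (constantCoeff p) := by
      have := stab p kp (max kp kq - kp) hkp
      rwa [Nat.add_sub_cancel' (le_max_left _ _)] at this
    have h2 : (BS 1)^[max kp kq] q = C (constantCoeff q) := by
      have := stab q kq (max kp kq - kq) hkq
      rwa [Nat.add_sub_cancel' (le_max_right _ _)] at this
    rw [iter_add, h1, h2, map_add, map_add]
  | mul_X p j hp =>
    obtain ⟨kp, hkp⟩ := hp
    refine ⟨max kp (j : ℕ), ?_⟩
    rw [iter_mul, iter_X _ j (le_max_right _ _), mul_zero]
    rw [map_mul, constantCoeff_X, mul_zero, map_zero]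

end Aux2
section Aux3
open MvPolynomial

lemma BS_fix_large (f : MyR) : ∃ N : ℕ+, ∀ i : ℕ+, N ≤ i → BS i f = f := by
  induction f using MvPolynomial.induction_on with
  | C a => exact ⟨1, fun i _ => BS_C i a⟩
  | add p q hp hq =>
    obtain ⟨Np, hNp⟩ := hp
    obtain ⟨Nq, hNq⟩ := hq
    exact ⟨max Np Nq, fun i hi => by
      rw [map_add, hNp i (le_trans (le_max_left _ _) hi),
        hNq i (le_trans (le_max_right _ _) hi)]⟩
  | mul_X p j hp =>
    obtain ⟨Np, hNp⟩ := hp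
    refine ⟨max Np (j + 1), fun i hi => ?_⟩
    rw [map_mul, hNp i (le_trans (le_max_left _ _) hi), BS_X,
      if_pos (lt_of_lt_of_le (PNat.lt_add_right j 1) (le_trans (le_max_right _ _) hi))]

-- size lemmas
lemma trim_size_le (t : BTree) (a i : ℕ+) : (t.trim a i).size ≤ t.size := by
  induction t generalizing a with
  | leaf => exact le_refl _
  | node l r ihl ihr =>
    rw [BTree.trim]
    split
    · simp [BTree.size]
    · simp only [BTree.size]
      have := ihl a
      have := ihr (a + l.numLeaves)
      omega

lemma qdesSet_leaf (a : ℕ+) : BTree.leaf.qdesSet a = ∅ := rfl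

lemma trim_size_lt (t : BTree) (a i : ℕ+) (h : i ∈ t.qdesSet a) :
    (t.trim a i).size < t.size := by
  induction t generalizing a with
  | leaf => exact absurd h (by rw [qdesSet_leaf]; exact Set.notMem_empty i)
  | node l r ihl ihr =>
    by_cases hll : l = BTree.leaf ∧ r = BTree.leaf
    · obtain ⟨h1, h2⟩ := hll
      subst h1; subst h2
      have : i = a := by
        have : i ∈ ({a} : Set ℕ+) := h
        simpa using this
      rw [BTree.trim, if_pos ⟨rfl, rfl, this.symm⟩]
      simp [BTree.size]
    · have hsplit : i ∈ l.qdesSet a ∪ r.qdesSet (a + l.numLeaves) := by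
        rcases l with _ | ⟨l1, l2⟩
        · rcases r with _ | ⟨r1, r2⟩
          · exact absurd ⟨rfl, rfl⟩ hll
          · exact h
        · exact h
      rw [BTree.trim, if_neg (fun hc => hll ⟨hc.1, hc.2.1⟩)]
      simp only [BTree.size]
      rcases hsplit with h' | h'
      · have := ihl a h'
        have := trim_size_le r (a + l.numLeaves) i
        omega
      · have := ihr (a + l.numLeaves) h'
        have := trim_size_le l a i
        omega

lemma forest_trim_size_lt (F : IndexedForest) (i : ℕ+) (h : i ∈ F.qdes) :
    (F.trim i).size < F.size := by
  obtain ⟨n₀, hn₀⟩ : ∃ n, i ∈ (F.trees n).qdesSet (F.firstLeaf n) := by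
    simpa [IndexedForest.qdes, Set.mem_iUnion] using h
  have hn₀supp : n₀ ∈ F.supp := by
    rw [IndexedForest.supp, Set.Finite.mem_toFinset]
    intro hleaf
    rw [hleaf, qdesSet_leaf] at hn₀
    exact hn₀
  have hsub : (F.trim i).supp ⊆ F.supp := by
    intro n hn
    rw [IndexedForest.supp, Set.Finite.mem_toFinset] at hn ⊢
    intro hleaf
    apply hn
    show ((F.trees n).trim _ i) = BTree.leaf
    rw [hleaf]
    rfl
  have heq : (F.trim i).size = ∑ n ∈ F.supp, ((F.trees n).trim (F.firstLeaf n) i).size := by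
    rw [IndexedForest.size]
    refine Finset.sum_subset hsub ?_
    intro n _ hn
    rw [IndexedForest.supp, Set.Finite.mem_toFinset] at hn
    simp only [Set.mem_setOf_eq, not_not] at hn
    show ((F.trim i).trees n).size = 0
    rw [hn]
    rfl
  rw [heq, IndexedForest.size]
  refine Finset.sum_lt_sum (fun n _ => trim_size_le _ _ _) ⟨n₀, hn₀supp, trim_size_lt _ _ _ hn₀⟩

end Aux3
/-- uniqueness of a family satisfying the defining relations of
the grove polynomials. -/
theorem stmt4 (β : ℤ) (T : ℕ+ → MyR → MyR)
    (hT : ∀ (i : ℕ+) (f : MyR), (X i : MyR) * T i f = BS (i + 1) f - BS i f)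
    (P Q : IndexedForest → MyR)
    (hP1 : P IndexedForest.empty = 1) (hQ1 : Q IndexedForest.empty = 1)
    (hP0 : ∀ F : IndexedForest, F ≠ IndexedForest.empty →
      constantCoeff (P F) = 0)
    (hQ0 : ∀ F : IndexedForest, F ≠ IndexedForest.empty →
      constantCoeff (Q F) = 0)
    (hPin : ∀ (F : IndexedForest) (i : ℕ+), i ∈ F.qdes →
      T i ((1 + C β * X (i + 1)) * P F) = P (F.trim i))
    (hPout : ∀ (F : IndexedForest) (i : ℕ+), i ∉ F.qdes →
      T i ((1 + C β * X (i + 1)) * P F) = -(C β) * BS i (P F))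
    (hQin : ∀ (F : IndexedForest) (i : ℕ+), i ∈ F.qdes →
      T i ((1 + C β * X (i + 1)) * Q F) = Q (F.trim i))
    (hQout : ∀ (F : IndexedForest) (i : ℕ+), i ∉ F.qdes →
      T i ((1 + C β * X (i + 1)) * Q F) = -(C β) * BS i (Q F)) :
    ∀ F : IndexedForest, P F = Q F := by
  suffices H : ∀ N : ℕ, ∀ F : IndexedForest, F.size < N → P F = Q F by
    exact fun F => H (F.size + 1) F (Nat.lt_succ_self _)
  intro N
  induction N with
  | zero => exact fun F h => absurd h (Nat.not_lt_zero _)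
  | succ N ih =>
    intro F hFsize
    by_cases he : F = IndexedForest.empty
    · rw [he, hP1, hQ1]
    · set D : MyR := P F - Q F with hDdef
      suffices hD0 : D = 0 by exact sub_eq_zero.mp hD0
      have hstep : ∀ i : ℕ+, ∃ c : MyR, BS (i + 1) D = c * BS i D := by
        intro i
        have hTP := hT i ((1 + C β * X (i + 1)) * P F)
        have hTQ := hT i ((1 + C β * X (i + 1)) * Q F)
        have e1 : BS (i + 1) ((1 + C β * X (i + 1)) * P F) = BS (i + 1) (P F) := by
          rw [map_mul, map_add, map_one, map_mul, BS_C, BS_X_self_succ, mul_zero,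
            add_zero, one_mul]
        have e2 : BS i ((1 + C β * X (i + 1)) * P F) = (1 + C β * X i) * BS i (P F) := by
          rw [map_mul, map_add, map_one, map_mul, BS_C, BS_X_succ]
        have e3 : BS (i + 1) ((1 + C β * X (i + 1)) * Q F) = BS (i + 1) (Q F) := by
          rw [map_mul, map_add, map_one, map_mul, BS_C, BS_X_self_succ, mul_zero,
            add_zero, one_mul]
        have e4 : BS i ((1 + C β * X (i + 1)) * Q F) = (1 + C β * X i) * BS i (Q F) := by
          rw [map_mul, map_add, map_one, map_mul, BS_C, BS_X_succ]
        rw [e1, e2] at hTP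
        rw [e3, e4] at hTQ
        by_cases hi : i ∈ F.qdes
        · have htrim : P (F.trim i) = Q (F.trim i) :=
            ih (F.trim i) (by have := forest_trim_size_lt F i hi; omega)
          rw [hPin F i hi] at hTP
          rw [hQin F i hi, ← htrim] at hTQ
          refine ⟨1 + C β * X i, ?_⟩
          rw [hDdef, map_sub, map_sub]
          linear_combination hTQ - hTP
        · rw [hPout F i hi] at hTP
          rw [hQout F i hi] at hTQ
          refine ⟨1, ?_⟩
          rw [hDdef, map_sub, map_sub, one_mul]
          linear_combination hTQ - hTP
      have hchain : ∀ k : ℕ, ∃ u : MyR, BS ⟨k + 1, Nat.succ_pos k⟩ D = u * BS 1 D := by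
        intro k
        induction k with
        | zero =>
          refine ⟨1, ?_⟩
          rw [one_mul]
          congr 1
        | succ k ihk =>
          obtain ⟨u, hu⟩ := ihk
          obtain ⟨c, hc⟩ := hstep ⟨k + 1, Nat.succ_pos k⟩
          refine ⟨c * u, ?_⟩
          have hidx : (⟨k + 1 + 1, Nat.succ_pos _⟩ : ℕ+) = (⟨k + 1, Nat.succ_pos k⟩ : ℕ+) + 1 := rfl
          rw [hu, ← mul_assoc] at hc
          exact hc
      obtain ⟨Nf, hNf⟩ := BS_fix_large D
      obtain ⟨u, hu⟩ := hchain (Nf : ℕ)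
      rw [hNf ⟨(Nf : ℕ) + 1, Nat.succ_pos _⟩
        ((PNat.coe_le_coe Nf _).mp (Nat.le_succ _))] at hu
      have hiter : ∀ m : ℕ, ∃ v : MyR, D = v * (BS 1)^[m] D := by
        intro m
        induction m with
        | zero => exact ⟨1, (one_mul D).symm⟩
        | succ m ihm =>
          obtain ⟨v, hv⟩ := ihm
          refine ⟨v * (BS 1)^[m] u, ?_⟩
          calc D = v * (BS 1)^[m] D := hv
            _ = v * (BS 1)^[m] (u * BS 1 D) := by rw [← hu]
            _ = v * ((BS 1)^[m] u * (BS 1)^[m] (BS 1 D)) := by rw [iter_mul]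
            _ = v * (BS 1)^[m] u * (BS 1)^[m + 1] D := by
                rw [mul_assoc, Function.iterate_succ_apply]
      have hct : constantCoeff D = 0 := by
        rw [hDdef, map_sub, hP0 F he, hQ0 F he, sub_zero]
      obtain ⟨m, hm⟩ := iter_eventually_C D
      obtain ⟨v, hv⟩ := hiter m
      rw [hm, hct, map_zero, mul_zero] at hv
      exact hv
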